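/- Let d ≥ 2 and let T_d be the d-dimensional folded Baker's map on Q_d. For any k, l ∈ ℕ, j ∈ ℤ ∩ [0, 2^k), and i ∈ ℤ ∩ [0, 2^{(d-1)l}), the set T_d^l(H^j_k) ∩ H^i_{(d-1)l} is a single horizontal dyadic slab of width 2^{-(k+(d-1)l)}; that is, there exists j' ∈ ℤ ∩ [0, 2^{k+(d-1)l}) such that T_d^l(H^j_k) ∩ H^i_{(d-1)l} = H^{j'}_{k+(d-1)l}. -/

import Mathlib

open MeasureTheory Set Filter

noncomputable section

/-- The 2D folded Baker's map on `(0,1)²` (extended to all of `ℝ²` by the same formulas). -/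
def T2 : ℝ × ℝ → ℝ × ℝ := fun p =>
  if p.1 < 1/2 then (1 - 2 * p.1, (1 - p.2) / 2)
  else if p.1 = 1/2 then (p.2, 1/2)
  else (2 * p.1 - 1, (1 + p.2) / 2)

/-- The map applying `T2` to the pair of coordinates `(x i, x j)` of `x ∈ ℝ^d`, leaving all
other coordinates unchanged. -/
def Tapply (d : ℕ) (i j : Fin d) (x : EuclideanSpace ℝ (Fin d)) :
    EuclideanSpace ℝ (Fin d) := WithLp.toLp 2 fun l =>
  if l = i then (T2 (x i, x j)).1 else if l = j then (T2 (x i, x j)).2 else x l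

/-- The `d`-dimensional folded Baker's map `T_d = T_{d,d-1} ∘ ⋯ ∘ T_{d,1}`, where `T_{d,i}`
applies `T2` to the coordinates `(x_i, x_d)`. -/
def Td (d : ℕ) : EuclideanSpace ℝ (Fin d) → EuclideanSpace ℝ (Fin d) := fun x =>
  (List.finRange d).foldl
    (fun y (i : Fin d) => if hi : i.val < d - 1 then Tapply d i ⟨d - 1, by omega⟩ y else y) x

/-- The open unit cube `Q_d = (0,1)^d`. -/
def Qd (d : ℕ) : Set (EuclideanSpace ℝ (Fin d)) := {x | ∀ i, x i ∈ Ioo (0:ℝ) 1}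

/-- `Q_d` minus all points with a dyadic rational coordinate. -/
def Qd' (d : ℕ) : Set (EuclideanSpace ℝ (Fin d)) :=
  Qd d \ {x | ∃ i, ∃ k : ℕ, ∃ m : ℤ, 2 ^ k * x i = (m : ℝ)}

/-- The last coordinate `x_d` of `x ∈ ℝ^d`. -/
def lastCoord (d : ℕ) (x : EuclideanSpace ℝ (Fin d)) : ℝ :=
  if h : 0 < d then x ⟨d - 1, by omega⟩ else 0

/-- The horizontal dyadic slab `H^j_k` of width `2^{-k}`. -/
def Hslab (d : ℕ) (j k : ℕ) : Set (EuclideanSpace ℝ (Fin d)) :=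
  {x | lastCoord d x ∈ Ioo ((j : ℝ) / 2 ^ k) (((j : ℝ) + 1) / 2 ^ k)} ∩ Qd' d

/-! ### Auxiliary machinery -/

/-- The affine map `y ↦ ± 2^N y + c` attached to the slab `H^i_N`. -/
def aff (N i : ℕ) (b : Bool) (y : ℝ) : ℝ :=
  if b then 2 ^ N * y - i else ((i : ℝ) + 1) - 2 ^ N * y

/-- The key invariant: `f` maps `Qd'` into itself, and on each horizontal slab `H^i_N`
the inverse of `f` exists there and its last coordinate is the affine map `aff N i b`. -/
def Good (d N : ℕ) (f : EuclideanSpace ℝ (Fin d) → EuclideanSpace ℝ (Fin d)) : Prop :=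
  Set.MapsTo f (Qd' d) (Qd' d) ∧
  ∀ i : ℕ, i < 2 ^ N → ∃ b : Bool,
    (∀ z ∈ Hslab d i N, ∃ x ∈ Qd' d, f x = z ∧ lastCoord d x = aff N i b (lastCoord d z)) ∧
    (∀ x ∈ Qd' d, f x ∈ Hslab d i N → lastCoord d x = aff N i b (lastCoord d (f x)))

lemma mem_Hslab {d j k : ℕ} {z : EuclideanSpace ℝ (Fin d)} :
    z ∈ Hslab d j k ↔
      lastCoord d z ∈ Ioo ((j : ℝ) / 2 ^ k) (((j : ℝ) + 1) / 2 ^ k) ∧ z ∈ Qd' d :=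
  Iff.rfl

lemma mem_Qd' {d : ℕ} {x : EuclideanSpace ℝ (Fin d)} :
    x ∈ Qd' d ↔ (∀ i, x i ∈ Ioo (0:ℝ) 1) ∧
      ∀ i, ∀ k : ℕ, ∀ m : ℤ, 2 ^ k * x i ≠ (m : ℝ) := by
  simp only [Qd', Qd, mem_diff, mem_setOf_eq, not_exists]

lemma Ioo_div_iff {c a y : ℝ} (hc : 0 < c) :
    y ∈ Ioo (a / c) ((a + 1) / c) ↔ a < c * y ∧ c * y < a + 1 := by
  rw [mem_Ioo, div_lt_iff₀ hc, lt_div_iff₀ hc]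
  constructor <;> rintro ⟨h1, h2⟩ <;> constructor <;> linarith

lemma good_id {d : ℕ} : Good d 0 id := by
  refine ⟨fun x hx => hx, ?_⟩
  intro i hi
  have hi0 : i = 0 := by omega
  subst hi0
  refine ⟨true, ?_, ?_⟩
  · intro z hz
    exact ⟨z, hz.2, rfl, by simp [aff]⟩
  · intro x hx h
    simp [aff]

/-- Composition lemma: goodness at depth `N` composed with goodness at depth `M`
gives goodness at depth `N + M`. -/
lemma good_comp {d N M : ℕ} {f g : EuclideanSpace ℝ (Fin d) → EuclideanSpace ℝ (Fin d)}
    (hf : Good d N f) (hg : Good d M g) : Good d (N + M) (f ∘ g) := by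
  obtain ⟨hfm, hf⟩ := hf
  obtain ⟨hgm, hg⟩ := hg
  refine ⟨fun x hx => hfm (hgm hx), ?_⟩
  intro i hi
  have hMpos : 0 < 2 ^ M := Nat.pow_pos (n := M) (by norm_num)
  have hqlt : i / 2 ^ M < 2 ^ N := by
    rw [Nat.div_lt_iff_lt_mul hMpos]
    calc i < 2 ^ (N + M) := hi
    _ = 2 ^ N * 2 ^ M := pow_add 2 N M
  have hslt : i % 2 ^ M < 2 ^ M := Nat.mod_lt _ hMpos
  have hieq : i = 2 ^ M * (i / 2 ^ M) + i % 2 ^ M := (Nat.div_add_mod i (2 ^ M)).symm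
  obtain ⟨b₁, hf1, hf2⟩ := hf (i / 2 ^ M) hqlt
  obtain ⟨i₁, hi₁lt, hi₁R⟩ : ∃ i₁ : ℕ, i₁ < 2 ^ M ∧
      (if b₁ then ((i₁ : ℝ) = (i % 2 ^ M : ℕ))
        else ((i₁ : ℝ) + ((i % 2 ^ M : ℕ) : ℝ) + 1 = 2 ^ M)) := by
    cases b₁ with
    | false =>
      refine ⟨2 ^ M - 1 - i % 2 ^ M, by omega, ?_⟩
      simp only [Bool.false_eq_true, if_false]
      have h : (2 ^ M - 1 - i % 2 ^ M) + i % 2 ^ M + 1 = 2 ^ M := by omega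
      exact_mod_cast congrArg (Nat.cast : ℕ → ℝ) h
    | true => exact ⟨i % 2 ^ M, hslt, by simp⟩
  obtain ⟨b₂, hg1, hg2⟩ := hg i₁ hi₁lt
  have hiR : (i : ℝ) = 2 ^ M * ((i / 2 ^ M : ℕ) : ℝ) + ((i % 2 ^ M : ℕ) : ℝ) := by
    exact_mod_cast congrArg (Nat.cast : ℕ → ℝ) hieq
  have hNpos : (0:ℝ) < 2 ^ N := by positivity
  have hMposR : (0:ℝ) < 2 ^ M := by positivity
  have hNMposR : (0:ℝ) < 2 ^ (N + M) := by positivity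
  have hpa : (2:ℝ) ^ (N + M) = 2 ^ N * 2 ^ M := pow_add 2 N M
  -- interval nesting: H^i_{N+M} ⊆ H^q_N (on last coordinates)
  have nest : ∀ y : ℝ, y ∈ Ioo ((i : ℝ) / 2 ^ (N + M)) (((i : ℝ) + 1) / 2 ^ (N + M)) →
      y ∈ Ioo (((i / 2 ^ M : ℕ) : ℝ) / 2 ^ N) ((((i / 2 ^ M : ℕ) : ℝ) + 1) / 2 ^ N) := by
    intro y hy
    rw [Ioo_div_iff hNMposR, hpa] at hy
    rw [Ioo_div_iff hNpos]
    obtain ⟨h1, h2⟩ := hy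
    have hsR : (0:ℝ) ≤ ((i % 2 ^ M : ℕ) : ℝ) := Nat.cast_nonneg _
    have hsR' : ((i % 2 ^ M : ℕ) : ℝ) + 1 ≤ 2 ^ M := by exact_mod_cast hslt
    constructor <;> nlinarith
  -- the transferred interval: aff N q b₁ maps the i-interval into the i₁-interval
  have trans : ∀ y : ℝ, y ∈ Ioo ((i : ℝ) / 2 ^ (N + M)) (((i : ℝ) + 1) / 2 ^ (N + M)) →
      aff N (i / 2 ^ M) b₁ y ∈ Ioo ((i₁ : ℝ) / 2 ^ M) (((i₁ : ℝ) + 1) / 2 ^ M) := by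
    intro y hy
    rw [Ioo_div_iff hNMposR, hpa] at hy
    rw [Ioo_div_iff hMposR]
    obtain ⟨h1, h2⟩ := hy
    cases b₁ with
    | true =>
      have e1 : (i₁ : ℝ) = ((i % 2 ^ M : ℕ) : ℝ) := by simpa using hi₁R
      simp only [aff, if_true]
      constructor <;> nlinarith
    | false =>
      have e1 : (i₁ : ℝ) + ((i % 2 ^ M : ℕ) : ℝ) + 1 = 2 ^ M := by simpa using hi₁R
      simp only [aff, Bool.false_eq_true, if_false]
      constructor <;> nlinarith
  -- composition of the two affine maps
  have compo : ∀ y : ℝ, aff M i₁ b₂ (aff N (i / 2 ^ M) b₁ y) = aff (N + M) i (b₁ == b₂) y := by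
    intro y
    cases b₁ with
    | true =>
      have e1 : (i₁ : ℝ) = ((i % 2 ^ M : ℕ) : ℝ) := by simpa using hi₁R
      cases b₂ <;> simp [aff, hpa] <;> linarith
    | false =>
      have e1 : (i₁ : ℝ) + ((i % 2 ^ M : ℕ) : ℝ) + 1 = 2 ^ M := by simpa using hi₁R
      cases b₂ <;> simp [aff, hpa] <;> linarith
  refine ⟨b₁ == b₂, ?_, ?_⟩
  · intro z hz
    have hzN : z ∈ Hslab d (i / 2 ^ M) N := ⟨nest _ hz.1, hz.2⟩
    obtain ⟨w, hwQ, hwz, hwlast⟩ := hf1 z hzN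
    have hwM : w ∈ Hslab d i₁ M := by
      refine ⟨?_, hwQ⟩
      rw [mem_setOf_eq, hwlast]
      exact trans _ hz.1
    obtain ⟨x, hxQ, hxw, hxlast⟩ := hg1 w hwM
    refine ⟨x, hxQ, ?_, ?_⟩
    · show f (g x) = z
      rw [hxw, hwz]
    · rw [hxlast, hwlast, compo]
  · intro x hxQ hfx
    have hgxQ : g x ∈ Qd' d := hgm hxQ
    have hzN : f (g x) ∈ Hslab d (i / 2 ^ M) N := ⟨nest _ hfx.1, hfx.2⟩
    have h2 := hf2 (g x) hgxQ hzN
    have hgxM : g x ∈ Hslab d i₁ M := by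
      refine ⟨?_, hgxQ⟩
      rw [mem_setOf_eq, h2]
      exact trans _ hfx.1
    have h3 := hg2 x hxQ hgxM
    show lastCoord d x = aff (N + M) i (b₁ == b₂) (lastCoord d (f (g x)))
    rw [h3, h2, compo]

/-! ### The elementary step `Tapply` is good at depth 1 -/

lemma xi_ne_half {d : ℕ} {x : EuclideanSpace ℝ (Fin d)} (hx : x ∈ Qd' d) (i : Fin d) :
    x i ≠ 1 / 2 := by
  intro h
  exact (mem_Qd'.mp hx).2 i 1 1 (by rw [h]; norm_num)

lemma T2_lt {a b : ℝ} (h : a < 1/2) : T2 (a, b) = (1 - 2*a, (1-b)/2) := by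
  simp only [T2]
  rw [if_pos h]

lemma T2_gt {a b : ℝ} (h : 1/2 < a) : T2 (a, b) = (2*a - 1, (1+b)/2) := by
  simp only [T2]
  rw [if_neg (not_lt.mpr h.le), if_neg (ne_of_gt h)]

lemma good_tapply {d : ℕ} (hd : 2 ≤ d) (i : Fin d) (hi : (i : ℕ) < d - 1) :
    Good d 1 (Tapply d i ⟨d - 1, by omega⟩) := by
  set e : Fin d := ⟨d - 1, by omega⟩ with he
  have hie : i ≠ e := by
    intro h
    rw [h] at hi
    simp [he] at hi
  have hlast : ∀ x : EuclideanSpace ℝ (Fin d), lastCoord d x = x e := by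
    intro x
    simp only [lastCoord]
    rw [dif_pos (by omega : 0 < d), he]
  have happ_i : ∀ x, Tapply d i e x i = (T2 (x i, x e)).1 := by
    intro x; simp only [Tapply]; simp
  have happ_e : ∀ x, Tapply d i e x e = (T2 (x i, x e)).2 := by
    intro x; simp only [Tapply, PiLp.toLp_apply]; rw [if_neg (Ne.symm hie)]; simp
  have happ_o : ∀ x, ∀ l, l ≠ i → l ≠ e → Tapply d i e x l = x l := by
    intro x l h1 h2; simp only [Tapply, PiLp.toLp_apply]; rw [if_neg h1, if_neg h2]
  have mapsto : Set.MapsTo (Tapply d i e) (Qd' d) (Qd' d) := by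
    intro x hx
    obtain ⟨hx1, hx2⟩ := mem_Qd'.mp hx
    rcases lt_or_gt_of_ne (xi_ne_half hx i) with hlt | hgt
    · rw [mem_Qd']
      constructor
      · intro l
        by_cases h1 : l = i
        · rw [h1, happ_i, T2_lt hlt]
          have h := hx1 i
          simp only [mem_Ioo] at h ⊢
          constructor <;> [linarith; linarith [h.1]]
        · by_cases h2 : l = e
          · rw [h2, happ_e, T2_lt hlt]
            have h := hx1 e
            simp only [mem_Ioo] at h ⊢
            constructor <;> [linarith [h.2]; linarith [h.1]]
          · rw [happ_o _ _ h1 h2]; exact hx1 l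
      · intro l k m hm
        by_cases h1 : l = i
        · rw [h1, happ_i, T2_lt hlt] at hm
          exact hx2 i (k+1) (2^k - m) (by push_cast; push_cast at hm; rw [pow_succ]; linarith)
        · by_cases h2 : l = e
          · rw [h2, happ_e, T2_lt hlt] at hm
            exact hx2 e k (2^k - 2*m) (by push_cast; push_cast at hm; linarith)
          · rw [happ_o _ _ h1 h2] at hm
            exact hx2 l k m hm
    · rw [mem_Qd']
      constructor
      · intro l
        by_cases h1 : l = i
        · rw [h1, happ_i, T2_gt hgt]
          have h := hx1 i
          simp only [mem_Ioo] at h ⊢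
          constructor <;> [linarith; linarith [h.2]]
        · by_cases h2 : l = e
          · rw [h2, happ_e, T2_gt hgt]
            have h := hx1 e
            simp only [mem_Ioo] at h ⊢
            constructor <;> [linarith [h.1]; linarith [h.2]]
          · rw [happ_o _ _ h1 h2]; exact hx1 l
      · intro l k m hm
        by_cases h1 : l = i
        · rw [h1, happ_i, T2_gt hgt] at hm
          exact hx2 i (k+1) (m + 2^k) (by push_cast; push_cast at hm; rw [pow_succ]; linarith)
        · by_cases h2 : l = e
          · rw [h2, happ_e, T2_gt hgt] at hm
            exact hx2 e k (2*m - 2^k) (by push_cast; push_cast at hm; linarith)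
          · rw [happ_o _ _ h1 h2] at hm
            exact hx2 l k m hm
  refine ⟨mapsto, ?_⟩
  intro q hq
  interval_cases q
  · -- q = 0 : bottom half, branch x_i < 1/2, b = false
    refine ⟨false, ?_, ?_⟩
    · -- surjectivity on the slab
      intro z hz
      obtain ⟨hzI, hzQ⟩ := hz
      rw [mem_setOf_eq, hlast, mem_Ioo] at hzI
      obtain ⟨hz1, hz2⟩ := mem_Qd'.mp hzQ
      have hze1 : 0 < z e := by
        have h := hzI.1; norm_num at h; linarith
      have hze2 : z e < 1/2 := by
        have h := hzI.2; norm_num at h; linarith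
      set x : EuclideanSpace ℝ (Fin d) := WithLp.toLp 2 fun l =>
        if l = i then (1 - z i) / 2 else if l = e then 1 - 2 * z e else z l with hxdef
      have hxi : x i = (1 - z i) / 2 := by rw [hxdef]; simp
      have hxe : x e = 1 - 2 * z e := by
        rw [hxdef]; simp only [PiLp.toLp_apply, if_neg (Ne.symm hie)]; simp
      have hxo : ∀ l, l ≠ i → l ≠ e → x l = z l := by
        intro l h1 h2; rw [hxdef]; simp only [PiLp.toLp_apply, if_neg h1, if_neg h2]
      have hxilt : x i < 1/2 := by
        rw [hxi]; have h := (hz1 i).1; linarith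
      have hxQ : x ∈ Qd' d := by
        rw [mem_Qd']
        constructor
        · intro l
          by_cases h1 : l = i
          · rw [h1, hxi]; have h := hz1 i; simp only [mem_Ioo] at h ⊢
            constructor <;> [linarith [h.2]; linarith [h.1]]
          · by_cases h2 : l = e
            · rw [h2, hxe]; simp only [mem_Ioo]
              constructor <;> linarith
            · rw [hxo l h1 h2]; exact hz1 l
        · intro l k m hm
          by_cases h1 : l = i
          · rw [h1, hxi] at hm
            exact hz2 i k (2^k - 2*m) (by push_cast; push_cast at hm; linarith)
          · by_cases h2 : l = e
            · rw [h2, hxe] at hm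
              exact hz2 e (k+1) (2^k - m) (by push_cast; push_cast at hm; rw [pow_succ]; linarith)
            · rw [hxo l h1 h2] at hm; exact hz2 l k m hm
      refine ⟨x, hxQ, ?_, ?_⟩
      · ext l
        by_cases h1 : l = i
        · rw [h1, happ_i, T2_lt hxilt, hxi]; ring
        · by_cases h2 : l = e
          · rw [h2, happ_e, T2_lt hxilt, hxe]; ring
          · rw [happ_o _ _ h1 h2, hxo l h1 h2]
      · rw [hlast, hlast, hxe]
        simp [aff]
    · -- preimage formula
      intro x hxQ hfx
      obtain ⟨hzI, hzQ⟩ := hfx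
      rw [mem_setOf_eq, hlast, mem_Ioo] at hzI
      obtain ⟨hx1, hx2⟩ := mem_Qd'.mp hxQ
      rcases lt_or_gt_of_ne (xi_ne_half hxQ i) with hlt | hgt
      · rw [hlast, hlast, happ_e, T2_lt hlt]
        simp [aff]
        ring
      · exfalso
        rw [happ_e, T2_gt hgt] at hzI
        have h := hzI.2
        have hxe0 := (hx1 e).1
        norm_num at h
        linarith
  · -- q = 1 : top half, branch x_i > 1/2, b = true
    refine ⟨true, ?_, ?_⟩
    · intro z hz
      obtain ⟨hzI, hzQ⟩ := hz
      rw [mem_setOf_eq, hlast, mem_Ioo] at hzI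
      obtain ⟨hz1, hz2⟩ := mem_Qd'.mp hzQ
      have hze1 : 1/2 < z e := by
        have h := hzI.1; norm_num at h; linarith
      have hze2 : z e < 1 := by
        have h := hzI.2; norm_num at h; linarith
      set x : EuclideanSpace ℝ (Fin d) := WithLp.toLp 2 fun l =>
        if l = i then (1 + z i) / 2 else if l = e then 2 * z e - 1 else z l with hxdef
      have hxi : x i = (1 + z i) / 2 := by rw [hxdef]; simp
      have hxe : x e = 2 * z e - 1 := by
        rw [hxdef]; simp only [PiLp.toLp_apply, if_neg (Ne.symm hie)]; simp
      have hxo : ∀ l, l ≠ i → l ≠ e → x l = z l := by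
        intro l h1 h2; rw [hxdef]; simp only [PiLp.toLp_apply, if_neg h1, if_neg h2]
      have hxigt : 1/2 < x i := by
        rw [hxi]; have h := (hz1 i).1; linarith
      have hxQ : x ∈ Qd' d := by
        rw [mem_Qd']
        constructor
        · intro l
          by_cases h1 : l = i
          · rw [h1, hxi]; have h := hz1 i; simp only [mem_Ioo] at h ⊢
            constructor <;> [linarith [h.1]; linarith [h.2]]
          · by_cases h2 : l = e
            · rw [h2, hxe]; simp only [mem_Ioo]
              constructor <;> linarith
            · rw [hxo l h1 h2]; exact hz1 l
        · intro l k m hm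
          by_cases h1 : l = i
          · rw [h1, hxi] at hm
            exact hz2 i k (2*m - 2^k) (by push_cast; push_cast at hm; linarith)
          · by_cases h2 : l = e
            · rw [h2, hxe] at hm
              exact hz2 e (k+1) (m + 2^k) (by push_cast; push_cast at hm; rw [pow_succ]; linarith)
            · rw [hxo l h1 h2] at hm; exact hz2 l k m hm
      refine ⟨x, hxQ, ?_, ?_⟩
      · ext l
        by_cases h1 : l = i
        · rw [h1, happ_i, T2_gt hxigt, hxi]; ring
        · by_cases h2 : l = e
          · rw [h2, happ_e, T2_gt hxigt, hxe]; ring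
          · rw [happ_o _ _ h1 h2, hxo l h1 h2]
      · rw [hlast, hlast, hxe]
        simp [aff]
    · intro x hxQ hfx
      obtain ⟨hzI, hzQ⟩ := hfx
      rw [mem_setOf_eq, hlast, mem_Ioo] at hzI
      obtain ⟨hx1, hx2⟩ := mem_Qd'.mp hxQ
      rcases lt_or_gt_of_ne (xi_ne_half hxQ i) with hlt | hgt
      · exfalso
        rw [happ_e, T2_lt hlt] at hzI
        have h := hzI.1
        have hxe1 := (hx1 e).1
        norm_num at h
        linarith
      · rw [hlast, hlast, happ_e, T2_gt hgt]
        simp [aff]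
        ring

/-! ### `Td` is good at depth `d - 1` -/

lemma good_prefix {d : ℕ} (hd : 2 ≤ d) :
    ∀ m, m ≤ d - 1 → Good d m (fun x => ((List.finRange d).take m).foldl
      (fun y (i : Fin d) => if hi : i.val < d - 1 then Tapply d i ⟨d - 1, by omega⟩ y else y) x) := by
  intro m
  induction m with
  | zero => intro _; exact good_id
  | succ m ih =>
    intro hm
    have hm' : m < d := by omega
    have hm1 : m < (List.finRange d).length := by simp [hm']
    have hget : (List.finRange d)[m]'hm1 = ⟨m, hm'⟩ := by
      rw [List.getElem_finRange]; rfl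
    have hmd1 : ((⟨m, hm'⟩ : Fin d) : ℕ) < d - 1 := by
      show m < d - 1; omega
    have hstep : (fun x => ((List.finRange d).take (m+1)).foldl
        (fun y (i : Fin d) => if hi : i.val < d - 1 then Tapply d i ⟨d - 1, by omega⟩ y else y) x)
        = (Tapply d ⟨m, hm'⟩ ⟨d - 1, by omega⟩) ∘ (fun x => ((List.finRange d).take m).foldl
        (fun y (i : Fin d) => if hi : i.val < d - 1 then Tapply d i ⟨d - 1, by omega⟩ y else y) x) := by
      funext x
      rw [List.take_succ, List.getElem?_eq_getElem hm1, hget]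
      simp only [Option.toList_some, List.foldl_append, List.foldl_cons, List.foldl_nil]
      rw [dif_pos hmd1]
      rfl
    rw [hstep]
    have hg := good_comp (good_tapply hd ⟨m, hm'⟩ hmd1) (ih (by omega))
    rwa [Nat.add_comm] at hg

lemma good_Td {d : ℕ} (hd : 2 ≤ d) : Good d (d - 1) (Td d) := by
  have h := good_prefix hd (d - 1) le_rfl
  have hdrop : (List.finRange d).drop (d-1) = [⟨d-1, by omega⟩] := by
    apply List.ext_getElem
    · simp; omega
    · intro n h1 h2
      simp only [List.length_drop, List.length_finRange] at h1
      simp only [List.length_cons, List.length_nil] at h2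
      rw [List.getElem_drop, List.getElem_finRange]
      have hn : n = 0 := by omega
      subst hn
      simp
  have heq : Td d = (fun x => ((List.finRange d).take (d-1)).foldl
      (fun y (i : Fin d) => if hi : i.val < d - 1 then Tapply d i ⟨d - 1, by omega⟩ y else y) x) := by
    funext x
    show (List.finRange d).foldl _ x = _
    conv_lhs => rw [← List.take_append_drop (d-1) (List.finRange d)]
    rw [List.foldl_append, hdrop]
    simp only [List.foldl_cons, List.foldl_nil]
    rw [dif_neg (by simp)]
  rw [heq]
  exact h

lemma good_iter {d : ℕ} (hd : 2 ≤ d) (l : ℕ) : Good d ((d - 1) * l) ((Td d)^[l]) := by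
  induction l with
  | zero => simpa using (good_id (d := d))
  | succ l ih =>
    have h := good_comp (good_Td hd) ih
    have heq : (d - 1) * (l + 1) = (d - 1) + (d - 1) * l := by ring
    rw [heq, Function.iterate_succ']
    exact h

/-! ### The main theorem -/

theorem image_of_horizontal_slab (d : ℕ) (hd : 2 ≤ d) (k l : ℕ) (j i : ℕ)
    (hj : j < 2 ^ k) (hi : i < 2 ^ ((d - 1) * l)) :
    ∃ j' : ℕ, j' < 2 ^ (k + (d - 1) * l) ∧
      (Td d)^[l] '' Hslab d j k ∩ Hslab d i ((d - 1) * l) = Hslab d j' (k + (d - 1) * l) := by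
  set N := (d - 1) * l with hN
  obtain ⟨hmap, hgood⟩ := good_iter hd l
  obtain ⟨b, h1, h2⟩ := hgood i hi
  have hkR : (0:ℝ) < 2 ^ k := by positivity
  have hNR : (0:ℝ) < 2 ^ N := by positivity
  have hkNR : (0:ℝ) < 2 ^ (k + N) := by positivity
  have hpa : (2:ℝ) ^ (k + N) = 2 ^ k * 2 ^ N := pow_add 2 k N
  have hjR : (j : ℝ) + 1 ≤ 2 ^ k := by exact_mod_cast hj
  have hiRle : (i : ℝ) + 1 ≤ 2 ^ N := by exact_mod_cast hi
  have hkpos : 0 < 2 ^ k := Nat.pow_pos (n := k) (by norm_num)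
  have hmul : (i + 1) * 2 ^ k ≤ 2 ^ (k + N) := by
    rw [pow_add, Nat.mul_comm (2^k)]
    exact Nat.mul_le_mul_right _ hi
  -- the generic set-theoretic argument, given a suitable j'
  have main : ∀ j' : ℕ, j' < 2 ^ (k + N) →
      (∀ y : ℝ, y ∈ Ioo ((j' : ℝ) / 2 ^ (k + N)) (((j' : ℝ) + 1) / 2 ^ (k + N)) ↔
        (aff N i b y ∈ Ioo ((j : ℝ) / 2 ^ k) (((j : ℝ) + 1) / 2 ^ k) ∧
          y ∈ Ioo ((i : ℝ) / 2 ^ N) (((i : ℝ) + 1) / 2 ^ N))) →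
      ∃ j' : ℕ, j' < 2 ^ (k + N) ∧
        (Td d)^[l] '' Hslab d j k ∩ Hslab d i N = Hslab d j' (k + N) := by
    intro j' hj'lt ivl
    refine ⟨j', hj'lt, ?_⟩
    ext z
    simp only [mem_inter_iff, mem_image]
    constructor
    · rintro ⟨⟨x, hx, rfl⟩, hz⟩
      have hxQ : x ∈ Qd' d := hx.2
      have hlasteq := h2 x hxQ hz
      refine ⟨?_, hz.2⟩
      rw [mem_setOf_eq, ivl]
      refine ⟨?_, hz.1⟩
      rw [← hlasteq]
      exact hx.1
    · intro hz
      obtain ⟨hzI, hzQ⟩ := hz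
      rw [mem_setOf_eq, ivl] at hzI
      obtain ⟨haff, hiI⟩ := hzI
      have hzslab : z ∈ Hslab d i N := ⟨hiI, hzQ⟩
      obtain ⟨x, hxQ, hxz, hxlast⟩ := h1 z hzslab
      refine ⟨⟨x, ⟨?_, hxQ⟩, hxz⟩, hzslab⟩
      rw [mem_setOf_eq, hxlast]
      exact haff
  cases b with
  | true =>
    refine main (j + i * 2 ^ k) ?_ ?_
    · calc j + i * 2 ^ k < 2 ^ k + i * 2 ^ k := by omega
      _ = (i + 1) * 2 ^ k := by ring
      _ ≤ 2 ^ (k + N) := hmul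
    · intro y
      rw [Ioo_div_iff hkNR, Ioo_div_iff hkR, Ioo_div_iff hNR, hpa]
      have hc : ((j + i * 2 ^ k : ℕ) : ℝ) = (j : ℝ) + (i : ℝ) * 2 ^ k := by push_cast; ring
      rw [hc]
      simp only [aff, if_true]
      constructor
      · rintro ⟨ha, hb⟩
        have hiy : (i:ℝ) < 2 ^ N * y := by
          rw [← mul_lt_mul_iff_right₀ hkR]
          linarith [show (0:ℝ) ≤ (j:ℝ) from Nat.cast_nonneg j]
        have hiy2 : 2 ^ N * y < (i:ℝ) + 1 := by
          rw [← mul_lt_mul_iff_right₀ hkR]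
          linarith
        exact ⟨⟨by linarith, by linarith⟩, hiy, hiy2⟩
      · rintro ⟨⟨ha1, ha2⟩, hb1, hb2⟩
        constructor <;> linarith
  | false =>
    have hsub : j + 1 ≤ (i + 1) * 2 ^ k := by
      calc j + 1 ≤ 2 ^ k := hj
      _ ≤ (i+1) * 2 ^ k := Nat.le_mul_of_pos_left _ (by omega)
    refine main ((i + 1) * 2 ^ k - (j + 1)) (by omega) ?_
    intro y
    rw [Ioo_div_iff hkNR, Ioo_div_iff hkR, Ioo_div_iff hNR, hpa]
    have hc : (((i + 1) * 2 ^ k - (j + 1) : ℕ) : ℝ) = ((i : ℝ) + 1) * 2 ^ k - ((j : ℝ) + 1) := by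
      push_cast [Nat.cast_sub hsub]
      ring
    rw [hc]
    simp only [aff, Bool.false_eq_true, if_false]
    constructor
    · rintro ⟨ha, hb⟩
      have hiy : (i:ℝ) < 2 ^ N * y := by
        rw [← mul_lt_mul_iff_right₀ hkR]
        linarith [show (0:ℝ) ≤ (j:ℝ) from Nat.cast_nonneg j]
      have hiy2 : 2 ^ N * y < (i:ℝ) + 1 := by
        rw [← mul_lt_mul_iff_right₀ hkR]
        linarith [show (0:ℝ) ≤ (j:ℝ) from Nat.cast_nonneg j]
      exact ⟨⟨by linarith, by linarith⟩, hiy, hiy2⟩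
    · rintro ⟨⟨ha1, ha2⟩, hb1, hb2⟩
      constructor <;> linarith

end
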